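/- Define polynomials p_n by p_0(x) = 1 and p_{n+1}(x) = x^2 * p_n''(x) + x*(1 - 2x) * p_n'(x) - x * p_n(x). Then for all n >= 0, p_{n+1}(x) = -x * sum over k from 0 to n of binomial(2n+1, 2k) * p_k(x). -/

import Mathlib

open Polynomial Finset

/-- The Sheffer-type polynomial sequence `p₀ = 1`,
`p_{n+1}(x) = x² pₙ″(x) + x(1 - 2x) pₙ′(x) - x pₙ(x)`. -/
noncomputable def KLpoly : ℕ → Polynomial ℤ
  | 0 => 1
  | n + 1 =>
      X ^ 2 * derivative (derivative (KLpoly n)) +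
        X * (1 - 2 * X) * derivative (KLpoly n) - X * KLpoly n

noncomputable def KLS (n : ℕ) : Polynomial ℤ :=
  ∑ k ∈ range (n+1), ((2*n+1).choose (2*k) : Polynomial ℤ) * KLpoly k
noncomputable def KLT (n : ℕ) : Polynomial ℤ :=
  ∑ k ∈ range (n+1), ((2*n+2).choose (2*k) : Polynomial ℤ) * KLpoly k
noncomputable def KLU (n : ℕ) : Polynomial ℤ :=
  ∑ k ∈ range (n+1), ((2*n+1).choose (2*k+1) : Polynomial ℤ) * KLpoly (k+1)
noncomputable def KLV (n : ℕ) : Polynomial ℤ :=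
  ∑ k ∈ range n, ((2*n+1).choose (2*k+1) : Polynomial ℤ) * KLpoly (k+1)
noncomputable def KLP1 (n : ℕ) : Polynomial ℤ :=
  ∑ k ∈ range (n+1), ((2*n+1).choose (2*k) : Polynomial ℤ) * KLpoly (k+1)

lemma KL_succ (k : ℕ) : KLpoly (k+1) =
    X ^ 2 * derivative (derivative (KLpoly k)) +
      X * (1 - 2 * X) * derivative (KLpoly k) - X * KLpoly k := rfl

lemma L_sum (m : ℕ) (f : ℕ → ℕ) :
    X ^ 2 * derivative (derivative (∑ k ∈ range m, (f k : Polynomial ℤ) * KLpoly k)) +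
      X * (1 - 2 * X) * derivative (∑ k ∈ range m, (f k : Polynomial ℤ) * KLpoly k) -
      X * (∑ k ∈ range m, (f k : Polynomial ℤ) * KLpoly k) =
    ∑ k ∈ range m, (f k : Polynomial ℤ) * KLpoly (k+1) := by
  simp only [derivative_sum, derivative_mul, derivative_natCast, zero_mul, zero_add,
    Finset.mul_sum, ← Finset.sum_add_distrib, ← Finset.sum_sub_distrib]
  refine Finset.sum_congr rfl fun k hk => ?_
  rw [KL_succ k]; ring

lemma pasA (n k : ℕ) : (2*n+2).choose (2*(k+1))
    = (2*n+1).choose (2*(k+1)) + (2*n+1).choose (2*k+1) := by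
  rw [(by ring : 2*(k+1) = (2*k+1)+1), (by ring : 2*n+2 = (2*n+1)+1),
    Nat.choose_succ_succ']
  omega

lemma pasB (n k : ℕ) : (2*(n+1)+1).choose (2*(k+1))
    = (2*n+1).choose (2*(k+1)) + 2 * ((2*n+1).choose (2*k+1)) + (2*n+1).choose (2*k) := by
  rw [(by ring : 2*(n+1)+1 = (2*n+2)+1), (by ring : 2*(k+1) = (2*k+1)+1),
    Nat.choose_succ_succ']
  rw [(by ring : (2:ℕ)*n+2 = (2*n+1)+1)]
  rw [Nat.choose_succ_succ' (2*n+1) (2*k), Nat.choose_succ_succ' (2*n+1) (2*k+1)]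
  omega

lemma pascal_TSV (n : ℕ) : KLT n = KLS n + KLV n := by
  unfold KLT KLS KLV
  rw [Finset.sum_range_succ', Finset.sum_range_succ']
  have h0 : ((2*n+2).choose (2*0) : Polynomial ℤ) * KLpoly 0
      = ((2*n+1).choose (2*0) : Polynomial ℤ) * KLpoly 0 := by
    norm_num
  rw [h0, add_right_comm, ← Finset.sum_add_distrib]
  congr 1
  refine Finset.sum_congr rfl fun k hk => ?_
  rw [pasA n k]; push_cast; ring

lemma KLU_eq (n : ℕ) : KLU n = KLV n + KLpoly (n+1) := by
  unfold KLU KLV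
  rw [Finset.sum_range_succ, Nat.choose_self]
  norm_num

lemma pascal2 (n : ℕ) : KLS (n+1) = KLS n + 2 * KLU n + KLP1 n := by
  have eext : (∑ k ∈ range (n+1), ((2*n+1).choose (2*(k+1)) : Polynomial ℤ) * KLpoly (k+1))
      = ∑ k ∈ range n, ((2*n+1).choose (2*(k+1)) : Polynomial ℤ) * KLpoly (k+1) := by
    rw [Finset.sum_range_succ, Nat.choose_eq_zero_of_lt (by omega : 2*n+1 < 2*(n+1))]
    norm_num
  have hsum : (∑ k ∈ range (n+1), ((2*(n+1)+1).choose (2*(k+1)) : Polynomial ℤ) * KLpoly (k+1))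
      = ∑ k ∈ range (n+1),
          (((2*n+1).choose (2*(k+1)) : Polynomial ℤ) * KLpoly (k+1)
            + 2 * (((2*n+1).choose (2*k+1) : Polynomial ℤ) * KLpoly (k+1))
            + ((2*n+1).choose (2*k) : Polynomial ℤ) * KLpoly (k+1)) := by
    refine Finset.sum_congr rfl fun k hk => ?_
    rw [pasB n k]; push_cast; ring
  unfold KLS KLU KLP1
  rw [Finset.sum_range_succ' (fun k => ((2*(n+1)+1).choose (2*k) : Polynomial ℤ) * KLpoly k) (n+1),
    Finset.sum_range_succ' (fun k => ((2*n+1).choose (2*k) : Polynomial ℤ) * KLpoly k) n,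
    hsum, Finset.sum_add_distrib, Finset.sum_add_distrib, ← eext]
  have c1 : ((2*(n+1)+1).choose (2*0) : Polynomial ℤ) = 1 := by norm_num
  have c2 : ((2*n+1).choose (2*0) : Polynomial ℤ) = 1 := by norm_num
  rw [c1, c2, Finset.mul_sum]
  ring

lemma bin_even_odd (m : ℕ) :
    ∑ i ∈ range (m+1), (2*m+3).choose (2*i+2) = ∑ i ∈ range (m+1), (2*m+3).choose (2*i+1) := by
  rw [← Finset.sum_range_reflect (fun i => (2*m+3).choose (2*i+1)) (m+1)]
  refine Finset.sum_congr rfl fun i hi => ?_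
  have hi' : i ≤ m := by simpa [Nat.lt_succ_iff] using hi
  rw [(by omega : m + 1 - 1 - i = m - i), (by omega : 2*(m-i)+1 = (2*m+3) - (2*i+2)),
    Nat.choose_symm (by omega)]

lemma keyNat (n j : ℕ) (hj : j < n) :
    ∑ k ∈ Finset.Ico j n, (2*n+1).choose (2*k+2) * (2*k+2).choose (2*j)
      = ∑ k ∈ Finset.Ico j n, (2*n+1).choose (2*k+1) * (2*k+1).choose (2*j) := by
  rw [Finset.sum_Ico_eq_sum_range, Finset.sum_Ico_eq_sum_range]
  have hm : n - j = (n - j - 1) + 1 := by omega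
  set m := n - j - 1 with hmdef
  rw [hm]
  have hL : ∀ i ∈ range (m+1),
      (2*n+1).choose (2*(j+i)+2) * (2*(j+i)+2).choose (2*j)
        = (2*n+1).choose (2*j) * (2*m+3).choose (2*i+2) := by
    intro i hi
    have hi' : i ≤ m := by simpa [Nat.lt_succ_iff] using hi
    rw [Nat.choose_mul (by omega : 2*j ≤ 2*(j+i)+2)]
    congr 1
    rw [(by omega : 2*n+1 - 2*j = 2*m+3), (by omega : 2*(j+i)+2 - 2*j = 2*i+2)]
  have hR : ∀ i ∈ range (m+1),
      (2*n+1).choose (2*(j+i)+1) * (2*(j+i)+1).choose (2*j)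
        = (2*n+1).choose (2*j) * (2*m+3).choose (2*i+1) := by
    intro i hi
    have hi' : i ≤ m := by simpa [Nat.lt_succ_iff] using hi
    rw [Nat.choose_mul (by omega : 2*j ≤ 2*(j+i)+1)]
    congr 1
    rw [(by omega : 2*n+1 - 2*j = 2*m+3), (by omega : 2*(j+i)+1 - 2*j = 2*i+1)]
  rw [Finset.sum_congr rfl hL, Finset.sum_congr rfl hR, ← Finset.mul_sum, ← Finset.mul_sum,
    bin_even_odd m]

lemma swap_aux (n : ℕ) (g : ℕ → ℕ → ℕ) :
    ∑ k ∈ range n, ∑ j ∈ range (k+1), ((g k j : ℕ) : Polynomial ℤ) * KLpoly j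
      = ∑ j ∈ range n, ((∑ k ∈ Finset.Ico j n, g k j : ℕ) : Polynomial ℤ) * KLpoly j := by
  simp only [Finset.range_eq_Ico]
  rw [← Finset.sum_Ico_Ico_comm 0 n (fun j k => ((g k j : ℕ) : Polynomial ℤ) * KLpoly j)]
  refine Finset.sum_congr rfl fun j hj => ?_
  rw [Nat.cast_sum, Finset.sum_mul]

lemma sumTV (n : ℕ) :
    ∑ k ∈ range n, ((2*n+1).choose (2*k+2) : Polynomial ℤ) * KLT k
      = ∑ k ∈ range n, ((2*n+1).choose (2*k+1) : Polynomial ℤ) * KLS k := by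
  have hT : ∀ k ∈ range n, ((2*n+1).choose (2*k+2) : Polynomial ℤ) * KLT k
      = ∑ j ∈ range (k+1),
          (((2*n+1).choose (2*k+2) * (2*k+2).choose (2*j) : ℕ) : Polynomial ℤ) * KLpoly j := by
    intro k _; unfold KLT; rw [Finset.mul_sum]
    refine Finset.sum_congr rfl fun j hj => ?_
    push_cast; ring
  have hS : ∀ k ∈ range n, ((2*n+1).choose (2*k+1) : Polynomial ℤ) * KLS k
      = ∑ j ∈ range (k+1),
          (((2*n+1).choose (2*k+1) * (2*k+1).choose (2*j) : ℕ) : Polynomial ℤ) * KLpoly j := by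
    intro k _; unfold KLS; rw [Finset.mul_sum]
    refine Finset.sum_congr rfl fun j hj => ?_
    push_cast; ring
  rw [Finset.sum_congr rfl hT, Finset.sum_congr rfl hS,
    swap_aux n (fun k j => (2*n+1).choose (2*k+2) * (2*k+2).choose (2*j)),
    swap_aux n (fun k j => (2*n+1).choose (2*k+1) * (2*k+1).choose (2*j))]
  refine Finset.sum_congr rfl fun j hj => ?_
  rw [keyNat n j (Finset.mem_range.mp hj)]

lemma deriv_KLS (n : ℕ) : derivative (KLS n)
    = ∑ k ∈ range n, ((2*n+1).choose (2*k+2) : Polynomial ℤ) * derivative (KLpoly (k+1)) := by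
  unfold KLS
  rw [derivative_sum]
  rw [Finset.sum_range_succ'
    (fun k => derivative (((2*n+1).choose (2*k) : Polynomial ℤ) * KLpoly k)) n]
  have h0 : derivative (((2*n+1).choose (2*0) : Polynomial ℤ) * KLpoly 0) = 0 := by
    have : KLpoly 0 = 1 := rfl
    rw [this]; simp
  rw [h0, add_zero]
  refine Finset.sum_congr rfl fun k hk => ?_
  rw [derivative_mul, derivative_natCast, (by ring : 2*(k+1) = 2*k+2)]
  ring

lemma stepB (n : ℕ) (hA : ∀ k, k ≤ n → KLpoly (k+1) = -X * KLS k)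
    (hB : ∀ k, k < n → derivative (KLpoly (k+1)) = -KLT k) :
    derivative (KLpoly (n+1)) = -KLT n := by
  have e1 : derivative (KLpoly (n+1)) = -(KLS n) - X * derivative (KLS n) := by
    rw [hA n le_rfl]
    simp only [derivative_mul, derivative_neg, derivative_X]
    ring
  have hXdS : X * derivative (KLS n) = KLV n := by
    rw [deriv_KLS, Finset.mul_sum]
    have h1 : ∀ k ∈ range n,
        X * (((2*n+1).choose (2*k+2) : Polynomial ℤ) * derivative (KLpoly (k+1)))
          = -(((2*n+1).choose (2*k+2) : Polynomial ℤ) * (X * KLT k)) := by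
      intro k hk
      rw [hB k (Finset.mem_range.mp hk)]
      ring
    rw [Finset.sum_congr rfl h1, Finset.sum_neg_distrib]
    have h2 : ∑ k ∈ range n, ((2*n+1).choose (2*k+2) : Polynomial ℤ) * (X * KLT k)
        = X * ∑ k ∈ range n, ((2*n+1).choose (2*k+2) : Polynomial ℤ) * KLT k := by
      rw [Finset.mul_sum]; refine Finset.sum_congr rfl fun k hk => ?_; ring
    rw [h2, sumTV, Finset.mul_sum, ← Finset.sum_neg_distrib]
    unfold KLV
    refine Finset.sum_congr rfl fun k hk => ?_
    have hk' := hA k (le_of_lt (Finset.mem_range.mp hk))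
    rw [hk']
    ring
  rw [e1, hXdS, pascal_TSV]
  ring

lemma stepA (n : ℕ) (hA : KLpoly (n+1) = -X * KLS n)
    (hB : derivative (KLpoly (n+1)) = -KLT n) :
    KLpoly (n+1+1) = -X * KLS (n+1) := by
  have e1 : derivative (KLpoly (n+1)) = -(KLS n) - X * derivative (KLS n) := by
    rw [hA]
    simp only [derivative_mul, derivative_neg, derivative_X]
    ring
  have f1 : X * derivative (KLS n) = KLT n - KLS n := by
    have h := hB; rw [e1] at h; linear_combination -h
  have e2 : derivative (derivative (KLpoly (n+1)))
      = -(2 * derivative (KLS n)) - X * derivative (derivative (KLS n)) := by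
    rw [e1]
    simp only [derivative_sub, derivative_neg, derivative_mul, derivative_X, one_mul]
    ring
  have hL : X ^ 2 * derivative (derivative (KLS n))
      + X * (1 - 2*X) * derivative (KLS n) - X * KLS n = KLP1 n :=
    L_sum (n+1) (fun k => (2*n+1).choose (2*k))
  have hi : KLS n + KLU n = KLT n + KLpoly (n+1) := by
    rw [KLU_eq, pascal_TSV]; ring
  rw [KL_succ (n+1), pascal2 n]
  linear_combination (X^2) * e2 + (X*(1-2*X)) * hB + X * hA + (-(X+2*X^2)) * f1
    + (-X) * hL + (2*X) * hi

lemma baseA : KLpoly 1 = -X * KLS 0 := by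
  have h0 : KLpoly 0 = 1 := rfl
  rw [KL_succ 0, h0]
  unfold KLS
  rw [Finset.sum_range_one, h0]
  simp

lemma ABmain : ∀ n, KLpoly (n+1) = -X * KLS n ∧ derivative (KLpoly (n+1)) = -KLT n := by
  intro n
  induction n using Nat.strong_induction_on with
  | _ n ih =>
    have hA : KLpoly (n+1) = -X * KLS n := by
      match n with
      | 0 => exact baseA
      | Nat.succ m => exact stepA m (ih m (by omega)).1 (ih m (by omega)).2
    refine ⟨hA, ?_⟩
    refine stepB n (fun k hk => ?_) (fun k hk => (ih k hk).2)
    rcases Nat.lt_or_ge k n with h | h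
    · exact (ih k h).1
    · obtain rfl : k = n := le_antisymm hk h
      exact hA

theorem KLpoly_succ_eq (n : ℕ) :
    KLpoly (n + 1) =
      -X * ∑ k ∈ Finset.range (n + 1), (Nat.choose (2 * n + 1) (2 * k) : ℤ) • KLpoly k := by
  rw [(ABmain n).1]
  congr 1
  unfold KLS
  refine Finset.sum_congr rfl fun k _ => ?_
  rw [zsmul_eq_mul]
  push_cast
  ring
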